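/- Let φ, ψ be flows on X, Y respectively. The uniform core of the product flow φ × ψ on X × Y equals the product of the uniform cores: C*(φ×ψ, X×Y) = C*(φ,X) × C*(ψ,Y). The same holds for the uniform (0,0)-cores C*₀. -/
import Mathlib


open Filter Topology

/-- For flows `φ` on `X` and `ψ` on `Y`, the uniform core of the product
flow equals the product of the uniform cores, and likewise for the uniform
`(0,0)`-cores. -/
theorem stmt7 {X Y : Type*}
    [NormedAddCommGroup X] [NormedSpace ℝ X] [FiniteDimensional ℝ X]
    [NormedAddCommGroup Y] [NormedSpace ℝ Y] [FiniteDimensional ℝ Y]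
    (φ : ℝ → X → X) (ψ : ℝ → Y → Y)
    (hφcont : Continuous fun p : ℝ × X => φ p.1 p.2)
    (hφ0 : ∀ x, φ 0 x = x) (hφgrp : ∀ t s x, φ t (φ s x) = φ (t + s) x)
    (hψcont : Continuous fun p : ℝ × Y => ψ p.1 p.2)
    (hψ0 : ∀ y, ψ 0 y = y) (hψgrp : ∀ t s y, ψ t (ψ s y) = ψ (t + s) y) :
    ({p : X × Y | ∀ t : ℕ → ℝ, Tendsto (fun n => |t n|) atTop atTop →
        ∃ q : ℕ → X × Y, Tendsto q atTop (𝓝 p) ∧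
          ∃ M : ℝ, ∀ n, ‖(φ (t n) (q n).1, ψ (t n) (q n).2)‖ ≤ M}
      = {x : X | ∀ t : ℕ → ℝ, Tendsto (fun n => |t n|) atTop atTop →
          ∃ u : ℕ → X, Tendsto u atTop (𝓝 x) ∧ ∃ M : ℝ, ∀ n, ‖φ (t n) (u n)‖ ≤ M} ×ˢ
        {y : Y | ∀ t : ℕ → ℝ, Tendsto (fun n => |t n|) atTop atTop →
          ∃ v : ℕ → Y, Tendsto v atTop (𝓝 y) ∧ ∃ M : ℝ, ∀ n, ‖ψ (t n) (v n)‖ ≤ M}) ∧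
    ({p : X × Y | ∀ t : ℕ → ℝ, Tendsto (fun n => |t n|) atTop atTop →
        ∃ q : ℕ → X × Y, Tendsto q atTop (𝓝 p) ∧
          Tendsto (fun n => (φ (t n) (q n).1, ψ (t n) (q n).2)) atTop (𝓝 (0, 0))}
      = {x : X | ∀ t : ℕ → ℝ, Tendsto (fun n => |t n|) atTop atTop →
          ∃ u : ℕ → X, Tendsto u atTop (𝓝 x) ∧
            Tendsto (fun n => φ (t n) (u n)) atTop (𝓝 0)} ×ˢ
        {y : Y | ∀ t : ℕ → ℝ, Tendsto (fun n => |t n|) atTop atTop →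
          ∃ v : ℕ → Y, Tendsto v atTop (𝓝 y) ∧
            Tendsto (fun n => ψ (t n) (v n)) atTop (𝓝 0)}) := by
  constructor
  · ext p
    constructor
    · intro hp
      constructor
      · intro t ht
        obtain ⟨q, hq, M, hM⟩ := hp t ht
        exact ⟨fun n => (q n).1, (continuous_fst.tendsto p).comp hq, M,
          fun n => le_trans (norm_fst_le (φ (t n) (q n).1, ψ (t n) (q n).2)) (hM n)⟩
      · intro t ht
        obtain ⟨q, hq, M, hM⟩ := hp t ht
        exact ⟨fun n => (q n).2, (continuous_snd.tendsto p).comp hq, M,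
          fun n => le_trans (norm_snd_le (φ (t n) (q n).1, ψ (t n) (q n).2)) (hM n)⟩
    · rintro ⟨h1, h2⟩ t ht
      obtain ⟨u, hu, M1, hM1⟩ := h1 t ht
      obtain ⟨v, hv, M2, hM2⟩ := h2 t ht
      refine ⟨fun n => (u n, v n), hu.prodMk_nhds hv, max M1 M2, fun n => ?_⟩
      rw [Prod.norm_def]
      exact max_le_max (hM1 n) (hM2 n)
  · ext p
    constructor
    · intro hp
      constructor
      · intro t ht
        obtain ⟨q, hq, hlim⟩ := hp t ht
        exact ⟨fun n => (q n).1, (continuous_fst.tendsto p).comp hq,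
          (continuous_fst.tendsto ((0 : X), (0 : Y))).comp hlim⟩
      · intro t ht
        obtain ⟨q, hq, hlim⟩ := hp t ht
        exact ⟨fun n => (q n).2, (continuous_snd.tendsto p).comp hq,
          (continuous_snd.tendsto ((0 : X), (0 : Y))).comp hlim⟩
    · rintro ⟨h1, h2⟩ t ht
      obtain ⟨u, hu, hlu⟩ := h1 t ht
      obtain ⟨v, hv, hlv⟩ := h2 t ht
      exact ⟨fun n => (u n, v n), hu.prodMk_nhds hv, hlu.prodMk_nhds hlv⟩
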